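/- arXiv:1207.1565 — 4 statements merged into one kernel-verified Lean document; each statement's English description precedes it below -/
import Mathlib

section
/- For every integer j ≥ 1 and every integer i ≥ 0, the function ℂ → ℂ defined by w ↦ w̄^{i+j}/w^i for w ≠ 0 and by 0 at w = 0 is of class C^{j−1} on ℂ (viewing ℂ as ℝ²). -/
open Complex ContinuousLinearMap Filter Asymptotics Topology

noncomputable def FnAux (i j : ℕ) (w : ℂ) : ℂ :=
  if w = 0 then 0 else (starRingEnd ℂ w) ^ (i + j) / w ^ i

lemma FnAux_zero (i j : ℕ) : FnAux i j 0 = 0 := if_pos rfl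

lemma norm_FnAux (i j : ℕ) (hj : 1 ≤ j) (w : ℂ) : ‖FnAux i j w‖ = ‖w‖ ^ j := by
  rcases eq_or_ne w 0 with rfl | hw
  · simp [FnAux, zero_pow (by omega : j ≠ 0)]
  · have hwn : ‖w‖ ≠ 0 := norm_ne_zero_iff.2 hw
    simp only [FnAux, if_neg hw, norm_div, norm_pow, RCLike.norm_conj]
    rw [pow_add]
    rw [mul_div_cancel_left₀ _ (pow_ne_zero i (by simpa using hwn))]

noncomputable def Lconj : ℂ →L[ℝ] ℂ := (conjCLE : ℂ ≃L[ℝ] ℂ)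

noncomputable def FdAux (i j : ℕ) (w : ℂ) : ℂ →L[ℝ] ℂ :=
  ContinuousLinearMap.mul ℝ ℂ (-(i : ℂ) * FnAux (i + 1) (j + 1) w)
    + (ContinuousLinearMap.mul ℝ ℂ (((i : ℂ) + j + 2) * FnAux i (j + 1) w)).comp Lconj

lemma key_deriv (i j : ℕ) (w : ℂ) : HasFDerivAt (FnAux i (j + 2)) (FdAux i j w) w := by
  rcases eq_or_ne w 0 with rfl | hw
  · have hFd : FdAux i j 0 = 0 := by
      simp [FdAux, FnAux_zero]
    rw [hFd]
    rw [hasFDerivAt_iff_isLittleO_nhds_zero]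
    simp only [zero_add, FnAux_zero, ContinuousLinearMap.zero_apply, sub_zero]
    rw [isLittleO_iff]
    intro c hc
    filter_upwards [Metric.ball_mem_nhds (0 : ℂ) (lt_min hc one_pos)] with z hz
    simp only [Metric.mem_ball, dist_zero_right] at hz
    rw [norm_FnAux i (j + 2) (by omega)]
    have h1 : ‖z‖ ≤ 1 := le_of_lt (lt_of_lt_of_le hz (min_le_right _ _))
    have h2 : ‖z‖ ≤ c := le_of_lt (lt_of_lt_of_le hz (min_le_left _ _))
    calc ‖z‖ ^ (j + 2) = ‖z‖ ^ (j + 1) * ‖z‖ := by ring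
    _ ≤ c * ‖z‖ := by
        apply mul_le_mul_of_nonneg_right _ (norm_nonneg z)
        calc ‖z‖ ^ (j + 1) ≤ ‖z‖ ^ 1 :=
              pow_le_pow_of_le_one (norm_nonneg z) h1 (by omega)
        _ = ‖z‖ := pow_one _
        _ ≤ c := h2
  · have hc : (starRingEnd ℂ) w ≠ 0 := by simpa using hw
    have h1 : HasFDerivAt (fun z : ℂ => (starRingEnd ℂ z) ^ (i + j + 2))
        ((((1 : ℂ →L[ℂ] ℂ).smulRight (((i + j + 2 : ℕ) : ℂ) *
          (starRingEnd ℂ w) ^ (i + j + 1))).restrictScalars ℝ).comp Lconj) w := by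
      have hp := (hasDerivAt_pow (i + j + 2) ((starRingEnd ℂ) w)).hasFDerivAt.restrictScalars ℝ
      have hconj : HasFDerivAt (fun z : ℂ => starRingEnd ℂ z) Lconj w := Lconj.hasFDerivAt
      have := hp.comp w hconj
      exact this
    have h2 : HasFDerivAt (fun z : ℂ => (z ^ i)⁻¹)
        ((-mulLeftRight ℝ ℂ (w ^ i)⁻¹ (w ^ i)⁻¹).comp
          (((1 : ℂ →L[ℂ] ℂ).smulRight (((i : ℕ) : ℂ) * w ^ (i - 1))).restrictScalars ℝ)) w := by
      have hp := (hasDerivAt_pow i w).hasFDerivAt.restrictScalars ℝ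
      have hinv := hasFDerivAt_inv' (𝕜 := ℝ) (pow_ne_zero i hw)
      exact hinv.comp w hp
    have h3 := h1.mul h2
    have h4 : HasFDerivAt (FnAux i (j + 2)) _ w := h3.congr_of_eventuallyEq (by
      filter_upwards [eventually_ne_nhds hw] with z hz
      rw [FnAux, if_neg hz, div_eq_mul_inv]
      simp only [Pi.mul_apply]
      ring_nf)
    convert h4 using 1
    ext u
    simp only [FdAux, FnAux, if_neg hw, ContinuousLinearMap.add_apply,
      ContinuousLinearMap.coe_comp', Function.comp_apply, mul_apply',
      ContinuousLinearMap.coe_smul', Pi.smul_apply, smul_eq_mul,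
      ContinuousLinearMap.coe_restrictScalars', smulRight_apply, one_apply,
      ContinuousLinearMap.neg_apply, mulLeftRight_apply, Lconj,
      ContinuousLinearEquiv.coe_coe, conjCLE_apply]
    push_cast
    simp only [id_eq]
    rcases Nat.eq_zero_or_pos i with rfl | hi
    · field_simp
      ring
    · obtain ⟨k, rfl⟩ : ∃ k, i = k + 1 := ⟨i - 1, by omega⟩
      simp only [Nat.add_sub_cancel]
      field_simp
      ring

lemma cont_FnAux (i j : ℕ) (hj : 1 ≤ j) : Continuous (FnAux i j) := by
  rw [continuous_iff_continuousAt]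
  intro w
  rcases eq_or_ne w 0 with rfl | hw
  · rw [ContinuousAt, FnAux_zero]
    apply squeeze_zero_norm (fun x => le_of_eq (norm_FnAux i j hj x))
    have : Tendsto (fun w : ℂ => ‖w‖ ^ j) (𝓝 0) (𝓝 (‖(0 : ℂ)‖ ^ j)) :=
      (continuous_norm.pow j).tendsto 0
    simpa [zero_pow (by omega : j ≠ 0)] using this
  · have h1 : ContinuousAt (fun w : ℂ => (starRingEnd ℂ w) ^ (i + j) / w ^ i) w :=
      ContinuousAt.div ((Complex.continuous_conj.pow (i + j)).continuousAt)
        ((continuous_pow i).continuousAt) (pow_ne_zero i hw)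
    apply h1.congr
    filter_upwards [eventually_ne_nhds hw] with z hz
    rw [FnAux, if_neg hz]

lemma contDiff_FdAux (i j n : ℕ) (h1 : ContDiff ℝ (n : ℕ∞) (FnAux (i + 1) (j + 1)))
    (h2 : ContDiff ℝ (n : ℕ∞) (FnAux i (j + 1))) :
    ContDiff ℝ (n : ℕ∞) (FdAux i j) := by
  apply ContDiff.add
  · exact (ContinuousLinearMap.mul ℝ ℂ).contDiff.comp (contDiff_const.mul h1)
  · exact (((compL ℝ ℂ ℂ ℂ).flip Lconj).contDiff).comp
      ((ContinuousLinearMap.mul ℝ ℂ).contDiff.comp (contDiff_const.mul h2))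

lemma main_FnAux : ∀ j i : ℕ, ContDiff ℝ ((j : ℕ∞)) (FnAux i (j + 1)) := by
  intro j
  induction j with
  | zero =>
    intro i
    show ContDiff ℝ ((0 : ℕ∞) : WithTop ℕ∞) (FnAux i 1)
    rw [show ((0 : ℕ∞) : WithTop ℕ∞) = 0 from rfl, contDiff_zero]
    exact cont_FnAux i 1 le_rfl
  | succ j ih =>
    intro i
    have hcast : ((((j + 1 : ℕ) : ℕ∞)) : WithTop ℕ∞) = ((j : ℕ∞) : WithTop ℕ∞) + 1 := by
      push_cast; rfl
    rw [hcast, contDiff_succ_iff_fderiv]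
    refine ⟨fun w => (key_deriv i j w).differentiableAt, ?_, ?_⟩
    · intro h; simp at h
    · have : fderiv ℝ (FnAux i (j + 2)) = FdAux i j :=
        funext fun w => (key_deriv i j w).fderiv
      rw [this]
      exact contDiff_FdAux i j j (ih (i + 1)) (ih i)

/-- For every integer `j ≥ 1` and every integer `i ≥ 0`, the function `ℂ → ℂ` defined by
`w ↦ w̄^{i+j} / w^i` for `w ≠ 0` and by `0` at `w = 0` is of class `C^{j-1}` on `ℂ`
(viewed as a map `ℝ² → ℝ²`). -/
theorem conj_pow_div_pow_contDiff (j : ℕ) (hj : 1 ≤ j) (i : ℕ) :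
    ContDiff ℝ ((j - 1 : ℕ) : ℕ∞)
      (fun w : ℂ => if w = 0 then 0 else (starRingEnd ℂ w) ^ (i + j) / w ^ i) := by
  obtain ⟨k, rfl⟩ : ∃ k, j = k + 1 := ⟨j - 1, by omega⟩
  simp only [Nat.add_sub_cancel]
  exact main_FnAux k i
end

section
/- Let 𝒰 ⊆ ℂ, let α, β : 𝒰 → ℂ be functions, and let z₁, …, z_n be pairwise distinct points of 𝒰. Then the divided difference of the product satisfies (α·β)[z₁, …, z_n] = Σ_{k=1}^n α[z₁, …, z_k] · β[z_k, …, z_n]. -/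
noncomputable section

/-- Divided differences of `h` at a list of points:
`h[z] = h z` and `h[z₁,…,z_{k+1}] = (h[z₁,…,z_k] - h[z₂,…,z_{k+1}])/(z₁ - z_{k+1})`. -/
def divDiff (h : ℂ → ℂ) : List ℂ → ℂ
  | [] => 0
  | [z] => h z
  | z :: w :: l =>
      (divDiff h (z :: (w :: l).dropLast) - divDiff h (w :: l)) /
        (z - (w :: l).getLast (List.cons_ne_nil w l))
termination_by l => l.length
decreasing_by
  · simp [List.length_dropLast]
  · simp

lemma divDiff_rec (h : ℂ → ℂ) (l : List ℂ) (hl : 2 ≤ l.length) :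
    divDiff h l = (divDiff h l.dropLast - divDiff h l.tail) /
      (l.getD 0 0 - l.getD (l.length - 1) 0) := by
  match l with
  | z :: w :: t =>
    rw [divDiff]
    congr 2
    simp [List.getLast_eq_getElem, List.getD_eq_getElem?_getD,
      List.getElem?_eq_getElem]

lemma getD_drop (l : List ℂ) (k i : ℕ) : (l.drop k).getD i 0 = l.getD (k + i) 0 := by
  simp [List.getD_eq_getElem?_getD]

lemma getD_take (l : List ℂ) (n i : ℕ) (h : i < n) : (l.take n).getD i 0 = l.getD i 0 := by
  simp [List.getD_eq_getElem?_getD, List.getElem?_take, h]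

lemma dropLast_drop' (l : List ℂ) (n : ℕ) : (l.drop n).dropLast = l.dropLast.drop n := by
  simp [List.dropLast_eq_take, List.drop_take]; omega

lemma take_dropLast' (l : List ℂ) (j : ℕ) (h : j ≤ l.length - 1) :
    l.dropLast.take j = l.take j := by
  simp [List.dropLast_eq_take, List.take_take, Nat.min_eq_left h]

/-- beta recurrence, cleared form -/
lemma beta_rec (β : ℂ → ℂ) (l : List ℂ) (k : ℕ) (hk : k + 2 ≤ l.length)
    (hne : l.getD k 0 ≠ l.getD (l.length - 1) 0) :
    divDiff β (l.dropLast.drop k) =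
      (l.getD k 0 - l.getD (l.length - 1) 0) * divDiff β (l.drop k)
        + divDiff β (l.drop (k + 1)) := by
  have h2 : 2 ≤ (l.drop k).length := by simp; omega
  have := divDiff_rec β (l.drop k) h2
  rw [List.tail_drop, dropLast_drop', getD_drop, getD_drop] at this
  rw [show k + ((l.drop k).length - 1) = l.length - 1 by simp; omega] at this
  simp only [Nat.add_zero] at this
  rw [eq_div_iff (sub_ne_zero.mpr hne)] at this
  linear_combination -this

/-- alpha recurrence, cleared form -/
lemma alpha_rec (α : ℂ → ℂ) (l : List ℂ) (k : ℕ) (hk : k + 2 ≤ l.length)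
    (hne : l.getD 0 0 ≠ l.getD (k + 1) 0) :
    divDiff α (l.tail.take (k + 1)) =
      divDiff α (l.take (k + 1))
        - (l.getD 0 0 - l.getD (k + 1) 0) * divDiff α (l.take (k + 2)) := by
  have hlen : (l.take (k + 2)).length = k + 2 := by simp; omega
  have h2 : 2 ≤ (l.take (k + 2)).length := by omega
  have := divDiff_rec α (l.take (k + 2)) h2
  rw [hlen] at this
  rw [show (l.take (k+2)).dropLast = l.take (k+1) by
        simp [List.dropLast_eq_take, List.take_take, hlen]] at this
  rw [show (l.take (k+2)).tail = l.tail.take (k+1) by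
        simp [← List.drop_one, List.drop_take]] at this
  simp only [show k + 2 - 1 = k + 1 from rfl] at this
  rw [getD_take l (k+2) 0 (by omega), getD_take l (k+2) (k+1) (by omega)] at this
  rw [eq_div_iff (sub_ne_zero.mpr hne)] at this
  linear_combination this

/-- the pure-algebra summation identity -/
lemma sum_key (A B m : ℕ → ℂ) (n : ℕ) :
    (∑ k ∈ Finset.range n, A k * ((m k - m n) * B k + B (k + 1)))
      - ∑ k ∈ Finset.range n, (A k - (m 0 - m (k + 1)) * A (k + 1)) * B (k + 1)
    = (∑ k ∈ Finset.range (n + 1), A k * B k) * (m 0 - m n) := by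
  calc (∑ k ∈ Finset.range n, A k * ((m k - m n) * B k + B (k + 1)))
      - ∑ k ∈ Finset.range n, (A k - (m 0 - m (k + 1)) * A (k + 1)) * B (k + 1)
      = ∑ k ∈ Finset.range n,
          ((m k - m n) * (A k * B k) + (m 0 - m (k + 1)) * (A (k + 1) * B (k + 1))) := by
        rw [← Finset.sum_sub_distrib]
        exact Finset.sum_congr rfl fun k _ => by ring
    _ = (∑ k ∈ Finset.range (n + 1), (m k - m n) * (A k * B k))
        + ∑ k ∈ Finset.range (n + 1), (m 0 - m k) * (A k * B k) := by
        rw [Finset.sum_range_succ, Finset.sum_range_succ']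
        simp only [sub_self, zero_mul, add_zero]
        rw [← Finset.sum_add_distrib]
    _ = (∑ k ∈ Finset.range (n + 1), A k * B k) * (m 0 - m n) := by
        rw [← Finset.sum_add_distrib, Finset.sum_mul]
        exact Finset.sum_congr rfl fun k _ => by ring

/-- Leibniz-type formula for divided differences of a product:
`(α·β)[z₁,…,z_n] = Σ_{k=1}^n α[z₁,…,z_k] · β[z_k,…,z_n]` for pairwise distinct points
`z₁,…,z_n` of `𝒰 ⊆ ℂ`. -/
theorem divDiff_mul (𝒰 : Set ℂ) (α β : ℂ → ℂ) (l : List ℂ)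
    (hne : l ≠ []) (hmem : ∀ z ∈ l, z ∈ 𝒰) (hdist : l.Pairwise (· ≠ ·)) :
    divDiff (fun z => α z * β z) l =
      ∑ k ∈ Finset.range l.length, divDiff α (l.take (k + 1)) * divDiff β (l.drop k) := by
  clear hmem
  induction' hn : l.length with n IH generalizing l
  · exact absurd (List.length_eq_zero_iff.mp hn) hne
  · obtain ⟨z, t, rfl⟩ := List.exists_cons_of_ne_nil hne
    match t, hn with
    | [], hn0 =>
      obtain rfl : n = 0 := by simpa using hn0.symm
      simp [divDiff]
    | w :: u, hn =>
      set L := z :: w :: u with hL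
      have hLlen : L.length = u.length + 2 := by rw [hL]; simp
      have hn1 : 1 ≤ n := by omega
      have hnn : L.length - 1 = n := by omega
      have hget : ∀ i j, i < j → j < L.length → L.getD i 0 ≠ L.getD j 0 := by
        intro i j hij hj
        have := (List.pairwise_iff_getElem.mp hdist) i j (hij.trans hj) hj hij
        simpa [List.getD_eq_getElem?_getD, List.getElem?_eq_getElem,
          (hij.trans hj), hj] using this
      have hdenom : L.getD 0 0 - L.getD n 0 ≠ 0 :=
        sub_ne_zero.mpr (hget 0 n (by omega) (by omega))
      have hdLlen : L.dropLast.length = n := by simp only [List.length_dropLast]; omega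
      have htllen : L.tail.length = n := by simp only [List.length_tail]; omega
      have IH1 := IH L.dropLast (by rw [← List.length_pos_iff]; omega)
        (hdist.sublist (List.dropLast_sublist L)) hdLlen
      have IH2 := IH L.tail (by rw [← List.length_pos_iff]; omega)
        (hdist.sublist (List.tail_sublist L)) htllen
      rw [divDiff_rec _ L (by omega), IH1, IH2, hnn, div_eq_iff hdenom]
      have e1 : ∀ k ∈ Finset.range n,
          divDiff α (L.dropLast.take (k + 1)) * divDiff β (L.dropLast.drop k) =
          divDiff α (L.take (k + 1)) *
            ((L.getD k 0 - L.getD n 0) * divDiff β (L.drop k) + divDiff β (L.drop (k + 1))) := by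
        intro k hk
        rw [Finset.mem_range] at hk
        have hk2 : k + 2 ≤ L.length := by omega
        rw [take_dropLast' L (k + 1) (by omega),
          beta_rec β L k hk2 (by rw [hnn]; exact hget k n (by omega) (by omega)), hnn]
      have e2 : ∀ k ∈ Finset.range n,
          divDiff α (L.tail.take (k + 1)) * divDiff β (L.tail.drop k) =
          (divDiff α (L.take (k + 1))
            - (L.getD 0 0 - L.getD (k + 1) 0) * divDiff α (L.take (k + 2))) *
            divDiff β (L.drop (k + 1)) := by
        intro k hk
        rw [Finset.mem_range] at hk
        have hk2 : k + 2 ≤ L.length := by omega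
        rw [show L.tail.drop k = L.drop (k + 1) by rw [← List.drop_one, List.drop_drop, Nat.add_comm],
          alpha_rec α L k hk2 (hget 0 (k + 1) (by omega) (by omega))]
      rw [Finset.sum_congr rfl e1, Finset.sum_congr rfl e2]
      have key := sum_key (fun k => divDiff α (L.take (k + 1)))
        (fun k => divDiff β (L.drop k)) (fun k => L.getD k 0) n
      exact key

end
end

section
/- There exist a neighborhood 𝒰 of bD and a constant c₁ > 0 such that the function δ(z,ζ) := inf{ε > 0 : ζ ∈ P_ε(z)} satisfies, for all z, ζ, ξ ∈ 𝒰: (1) (1/c₁) δ(ζ,z) ≤ δ(z,ζ) ≤ c₁ δ(ζ,z); (2) δ(z,ζ) ≤ c₁ (δ(z,ξ) + δ(ξ,ζ)). -/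
set_option maxHeartbeats 1000000

noncomputable section

open Set

/-- The Koranyi ball of radius `r` centered at `ζ`, relative to the unit normal field `η`
and the tangent field `v`. -/
def kball {E : Type*} [NormedAddCommGroup E] [NormedSpace ℂ E]
    (η v : E → E) (r : ℝ) (ζ : E) : Set E :=
  {z | ∃ lam mu : ℂ, z = ζ + lam • η ζ + mu • v ζ ∧
    ‖lam‖ < r ∧ ‖mu‖ < Real.sqrt r}

/-- The Koranyi pseudo-distance `δ(z,ζ) = inf {ε > 0 : ζ ∈ P_ε(z)}`. -/
def kdist {E : Type*} [NormedAddCommGroup E] [NormedSpace ℂ E]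
    (η v : E → E) (z ζ : E) : ℝ :=
  sInf {ε : ℝ | 0 < ε ∧ ζ ∈ kball η v ε z}

namespace KoranyiAux

local notation "E2" => EuclideanSpace ℂ (Fin 2)

lemma inner_self_one {e : E2} (h : ‖e‖ = 1) : (inner ℂ e e : ℂ) = 1 := by
  rw [inner_self_eq_norm_sq_to_K, h]
  norm_num

/-- Two orthonormal vectors in `ℂ²` span everything; explicit coefficients. -/
lemma rep {e₁ e₂ : E2} (h1 : ‖e₁‖ = 1) (h2 : ‖e₂‖ = 1)
    (h3 : (inner ℂ e₁ e₂ : ℂ) = 0) (w : E2) :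
    w = (inner ℂ e₁ w : ℂ) • e₁ + (inner ℂ e₂ w : ℂ) • e₂ := by
  have h3' : (inner ℂ e₂ e₁ : ℂ) = 0 := by
    rw [← inner_conj_symm, h3, map_zero]
  set u : E2 := w - ((inner ℂ e₁ w : ℂ) • e₁ + (inner ℂ e₂ w : ℂ) • e₂) with hu
  have hu1 : (inner ℂ e₁ u : ℂ) = 0 := by
    simp [hu, inner_sub_right, inner_add_right, inner_smul_right, inner_self_one h1, h3, h1]
  have hu2 : (inner ℂ e₂ u : ℂ) = 0 := by
    simp [hu, inner_sub_right, inner_add_right, inner_smul_right, inner_self_one h2, h3', h2]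
  have hu0 : u = 0 := by
    by_contra hne
    have hnu : ‖u‖ ≠ 0 := by simpa using hne
    set c : ℂ := (‖u‖ : ℂ)⁻¹ with hc
    have hcnorm : ‖c‖ = ‖u‖⁻¹ := by
      simp [hc]
    have hcu : ‖c • u‖ = 1 := by
      rw [norm_smul, hcnorm, inv_mul_cancel₀ hnu]
    have hu1' : (inner ℂ u e₁ : ℂ) = 0 := by rw [← inner_conj_symm, hu1, map_zero]
    have hu2' : (inner ℂ u e₂ : ℂ) = 0 := by rw [← inner_conj_symm, hu2, map_zero]
    clear_value u
    clear hu
    have horth : Orthonormal ℂ ![e₁, e₂, c • u] := by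
      constructor
      · intro i
        fin_cases i
        · exact h1
        · exact h2
        · exact hcu
      · intro i j hij
        fin_cases i <;> fin_cases j <;>
          simp_all [inner_smul_left, inner_smul_right]
    have hcard := horth.linearIndependent.fintype_card_le_finrank
    rw [finrank_euclideanSpace_fin] at hcard
    norm_num [Fintype.card_fin] at hcard
  have hu0' : w - ((inner ℂ e₁ w : ℂ) • e₁ + (inner ℂ e₂ w : ℂ) • e₂) = 0 := hu0
  exact sub_eq_zero.mp hu0'

lemma coeff₁ {e₁ e₂ : E2} (h1 : ‖e₁‖ = 1)
    (h3 : (inner ℂ e₁ e₂ : ℂ) = 0) (l m : ℂ) :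
    (inner ℂ e₁ (l • e₁ + m • e₂) : ℂ) = l := by
  simp [inner_add_right, inner_smul_right, inner_self_one h1, h3, h1]

lemma coeff₂ {e₁ e₂ : E2} (h2 : ‖e₂‖ = 1)
    (h3 : (inner ℂ e₁ e₂ : ℂ) = 0) (l m : ℂ) :
    (inner ℂ e₂ (l • e₁ + m • e₂) : ℂ) = m := by
  have h3' : (inner ℂ e₂ e₁ : ℂ) = 0 := by rw [← inner_conj_symm, h3, map_zero]
  simp [inner_add_right, inner_smul_right, inner_self_one h2, h3', h2]

/-- Parseval for the orthonormal pair. -/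
lemma normsq {e₁ e₂ : E2} (h1 : ‖e₁‖ = 1) (h2 : ‖e₂‖ = 1)
    (h3 : (inner ℂ e₁ e₂ : ℂ) = 0) (w : E2) :
    ‖w‖ ^ 2 = ‖(inner ℂ e₁ w : ℂ)‖ ^ 2 + ‖(inner ℂ e₂ w : ℂ)‖ ^ 2 := by
  set a : ℂ := (inner ℂ e₁ w : ℂ) with ha
  set b : ℂ := (inner ℂ e₂ w : ℂ) with hb
  have hrep := rep h1 h2 h3 w
  have hortho : (inner ℂ (a • e₁) (b • e₂) : ℂ) = 0 := by
    rw [inner_smul_left, inner_smul_right, h3]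
    ring
  calc ‖w‖ ^ 2 = ‖a • e₁ + b • e₂‖ ^ 2 := by rw [← hrep]
    _ = ‖a • e₁‖ ^ 2 + 2 * Complex.re (inner ℂ (a • e₁) (b • e₂) : ℂ) + ‖b • e₂‖ ^ 2 :=
        norm_add_sq (𝕜 := ℂ) _ _
    _ = ‖a‖ ^ 2 + ‖b‖ ^ 2 := by
        simp [hortho, norm_smul, h1, h2]

/-- The explicit formula for the Koranyi pseudo-distance. -/
lemma kdist_eq {η v : E2 → E2} {z : E2} (h1 : ‖η z‖ = 1) (h2 : ‖v z‖ = 1)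
    (h3 : (inner ℂ (η z) (v z) : ℂ) = 0) (ζ : E2) :
    kdist η v z ζ
      = max ‖(inner ℂ (η z) (ζ - z) : ℂ)‖ (‖(inner ℂ (v z) (ζ - z) : ℂ)‖ ^ 2) := by
  set lam : ℂ := (inner ℂ (η z) (ζ - z) : ℂ) with hlam
  set mu : ℂ := (inner ℂ (v z) (ζ - z) : ℂ) with hmu
  have habs : ∀ x : ℂ, ‖x‖ = ‖x‖ := fun x => rfl
  have hset : {ε : ℝ | 0 < ε ∧ ζ ∈ kball η v ε z} = Ioi (max ‖lam‖ (‖mu‖ ^ 2)) := by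
    ext ε
    simp only [mem_setOf_eq, kball, mem_Ioi]
    constructor
    · rintro ⟨hε, l, m, hrepr, hl, hm⟩
      have hw : ζ - z = l • η z + m • v z := by
        rw [hrepr]; abel
      have hl' : lam = l := by rw [hlam, hw, coeff₁ h1 h3]
      have hm' : mu = m := by rw [hmu, hw, coeff₂ h2 h3]
      rw [max_lt_iff]
      constructor
      · rw [hl']; rw [habs] at hl; exact hl
      · rw [hm']
        rw [habs] at hm
        exact (Real.lt_sqrt (norm_nonneg m)).mp hm
    · intro hε
      have h0 : (0 : ℝ) ≤ max ‖lam‖ (‖mu‖ ^ 2) :=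
        le_trans (norm_nonneg lam) (le_max_left _ _)
      have hεpos : 0 < ε := lt_of_le_of_lt h0 hε
      refine ⟨hεpos, lam, mu, ?_, ?_, ?_⟩
      · have hrw := rep h1 h2 h3 (ζ - z)
        have h' : ζ = z + (lam • η z + mu • v z) := by
          rw [← hrw]; abel
        rw [h']; abel
      · rw [habs]; exact lt_of_le_of_lt (le_max_left _ _) hε
      · rw [habs, Real.lt_sqrt (norm_nonneg mu)]
        exact lt_of_le_of_lt (le_max_right _ _) hε
  rw [kdist, hset, csInf_Ioi]

/-- A `C¹` unit vector field on an open set is Lipschitz on a compact subset. -/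
lemma exists_lip {f : E2 → E2} {U : Set E2} (hU : IsOpen U)
    (hf : ContDiffOn ℝ (⊤ : ℕ∞) f U) (hfu : ∀ x ∈ U, ‖f x‖ = 1)
    {K : Set E2} (hK : IsCompact K) (hKU : K ⊆ U) :
    ∃ L : ℝ, 1 ≤ L ∧ ∀ x ∈ K, ∀ y ∈ K, ‖f x - f y‖ ≤ L * ‖x - y‖ := by
  have hat : ∀ x ∈ K, ∃ (C : NNReal) (r : ℝ), 0 < r ∧
      LipschitzOnWith C f (Metric.ball x r) := by
    intro x hx
    have hca : ContDiffAt ℝ 1 f x :=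
      (hf.contDiffAt (hU.mem_nhds (hKU hx))).of_le (by exact_mod_cast le_top)
    obtain ⟨C, t, ht, hlip⟩ := hca.exists_lipschitzOnWith
    obtain ⟨r, hr, hball⟩ := Metric.mem_nhds_iff.mp ht
    exact ⟨C, r, hr, hlip.mono hball⟩
  choose! C r hr hlip using hat
  rcases K.eq_empty_or_nonempty with hKe | hKne
  · exact ⟨1, le_rfl, by simp [hKe]⟩
  have hcov : K ⊆ ⋃ x ∈ K, Metric.ball x (r x / 2) := by
    intro x hx
    exact mem_biUnion hx (by simp [Metric.mem_ball, half_pos (hr x hx)])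
  obtain ⟨s, hsK, hsfin, hscov⟩ :=
    hK.elim_finite_subcover_image (fun x _ => Metric.isOpen_ball) hcov
  have hsne : (hsfin.toFinset).Nonempty := by
    obtain ⟨x, hx⟩ := hKne
    have hmem := hscov hx
    simp only [mem_iUnion] at hmem
    obtain ⟨i, hi, _⟩ := hmem
    exact ⟨i, hsfin.mem_toFinset.mpr hi⟩
  set r0 : ℝ := hsfin.toFinset.inf' hsne (fun x => r x / 2) with hr0
  set L0 : ℝ := hsfin.toFinset.sup' hsne (fun x => (C x : ℝ)) with hL0
  have hr0pos : 0 < r0 := by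
    rw [hr0, Finset.lt_inf'_iff]
    intro x hx
    exact half_pos (hr x (hsK (hsfin.mem_toFinset.mp hx)))
  have hL0nn : 0 ≤ L0 := by
    obtain ⟨x, hx⟩ := hsne
    exact le_trans (C x).2 (Finset.le_sup' (fun x => (C x : ℝ)) hx)
  have hmax0 : (0:ℝ) ≤ max L0 (2 / r0) := le_trans hL0nn (le_max_left _ _)
  refine ⟨max L0 (2 / r0) + 1, by linarith, fun x hx y hy => ?_⟩
  rcases lt_or_ge ‖x - y‖ r0 with hlt | hge
  · obtain ⟨x₀, hx₀s, hxball⟩ : ∃ x₀ ∈ s, x ∈ Metric.ball x₀ (r x₀ / 2) := by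
      have hmem := hscov hx
      simp only [mem_iUnion] at hmem
      obtain ⟨i, hi, hm⟩ := hmem
      exact ⟨i, hi, hm⟩
    have hx₀K : x₀ ∈ K := hsK hx₀s
    have hrle : r0 ≤ r x₀ / 2 :=
      Finset.inf'_le (fun x => r x / 2) (hsfin.mem_toFinset.mpr hx₀s)
    rw [Metric.mem_ball] at hxball
    have hyball : y ∈ Metric.ball x₀ (r x₀) := by
      rw [Metric.mem_ball]
      have hd1 : dist y x₀ ≤ dist y x + dist x x₀ := dist_triangle y x x₀
      have hd2 : dist y x = ‖x - y‖ := by rw [dist_eq_norm, norm_sub_rev]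
      linarith
    have hxball' : x ∈ Metric.ball x₀ (r x₀) := by
      rw [Metric.mem_ball]
      have := half_pos (hr x₀ hx₀K)
      linarith
    have hd := (hlip x₀ hx₀K).dist_le_mul x hxball' y hyball
    have hCle : (C x₀ : ℝ) ≤ L0 :=
      Finset.le_sup' (fun x => (C x : ℝ)) (hsfin.mem_toFinset.mpr hx₀s)
    rw [dist_eq_norm, dist_eq_norm] at hd
    have hmul : (C x₀ : ℝ) * ‖x - y‖ ≤ (max L0 (2 / r0) + 1) * ‖x - y‖ := by
      apply mul_le_mul_of_nonneg_right _ (norm_nonneg _)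
      have := le_max_left L0 (2 / r0)
      linarith
    linarith
  · have h2 : ‖f x - f y‖ ≤ 2 := by
      calc ‖f x - f y‖ ≤ ‖f x‖ + ‖f y‖ := norm_sub_le _ _
        _ = 2 := by rw [hfu x (hKU hx), hfu y (hKU hy)]; norm_num
    have h3 : 2 ≤ (2 / r0) * ‖x - y‖ := by
      rw [div_mul_eq_mul_div, le_div_iff₀ hr0pos]
      nlinarith
    have h4 : (2 / r0) * ‖x - y‖ ≤ (max L0 (2 / r0) + 1) * ‖x - y‖ := by
      apply mul_le_mul_of_nonneg_right _ (norm_nonneg _)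
      have := le_max_right L0 (2 / r0)
      linarith
    linarith

/-- A convex function with a bounded nonempty strict sublevel set has bounded 0-sublevel set. -/
lemma sublevel_bounded {ρ : E2 → ℝ} (hconv : ConvexOn ℝ univ ρ)
    (hbd : Bornology.IsBounded {z | ρ z < 0}) (hne : Set.Nonempty {z | ρ z < 0}) :
    Bornology.IsBounded {z | ρ z ≤ 0} := by
  obtain ⟨z₀, hz₀⟩ := hne
  obtain ⟨R, hR⟩ := hbd.subset_closedBall 0
  rw [Metric.isBounded_iff_subset_closedBall 0]
  refine ⟨R, fun x hx => ?_⟩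
  simp only [mem_setOf_eq] at hx hz₀
  have key : ∀ s : ℝ, 0 < s → s < 1 →
      (fun s : ℝ => (1 - s) • z₀ + s • x) s ∈ Metric.closedBall 0 R := by
    intro s hs0 hs1
    apply hR
    have hcomb := hconv.2 (mem_univ z₀) (mem_univ x)
      (by linarith : (0:ℝ) ≤ 1 - s) (le_of_lt hs0) (by ring)
    simp only [mem_setOf_eq]
    have h1 : (1 - s) * ρ z₀ < 0 := mul_neg_of_pos_of_neg (by linarith) hz₀
    have h2 : s * ρ x ≤ 0 := mul_nonpos_of_nonneg_of_nonpos (le_of_lt hs0) hx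
    calc ρ ((1 - s) • z₀ + s • x) ≤ (1 - s) * ρ z₀ + s * ρ x := hcomb
      _ < 0 := by linarith
  have htend : Filter.Tendsto (fun s : ℝ => (1 - s) • z₀ + s • x)
      (nhdsWithin 1 (Set.Ioo (0:ℝ) 1)) (nhds x) := by
    have hcont : Continuous (fun s : ℝ => (1 - s) • z₀ + s • x) := by fun_prop
    have h := hcont.tendsto 1
    simp only [sub_self, zero_smul, one_smul, zero_add] at h
    exact h.mono_left nhdsWithin_le_nhds
  have hne' : (nhdsWithin (1:ℝ) (Set.Ioo (0:ℝ) 1)).NeBot := by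
    apply mem_closure_iff_nhdsWithin_neBot.mp
    rw [closure_Ioo (by norm_num : (0:ℝ) ≠ 1)]
    exact ⟨by norm_num, le_rfl⟩
  have hev : ∀ᶠ s in nhdsWithin (1:ℝ) (Set.Ioo (0:ℝ) 1),
      (fun s : ℝ => (1 - s) • z₀ + s • x) s ∈ Metric.closedBall 0 R :=
    Filter.eventually_of_mem self_mem_nhdsWithin (fun s hs => key s hs.1 hs.2)
  exact Metric.isClosed_closedBall.mem_of_tendsto htend hev

end KoranyiAux

open KoranyiAux in
/-- On a strictly convex domain `D = {ρ < 0} ⊆ ℂ²`, the function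
`δ(z,ζ) = inf{ε > 0 : ζ ∈ P_ε(z)}` is a pseudo-distance near `bD`: it is quasi-symmetric and
satisfies a quasi-triangle inequality. -/
theorem koranyi_pseudodistance
    (ρ : EuclideanSpace ℂ (Fin 2) → ℝ)
    (hρ : ContDiff ℝ (⊤ : ℕ∞) ρ)
    (hconv : StrictConvexOn ℝ Set.univ ρ)
    (hbd : Bornology.IsBounded {z | ρ z < 0})
    (hne : Set.Nonempty {z | ρ z < 0})
    (U₀ : Set (EuclideanSpace ℂ (Fin 2))) (hU₀ : IsOpen U₀)
    (hbDU₀ : {z | ρ z = 0} ⊆ U₀)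
    (hgrad : ∀ z ∈ U₀, fderiv ℝ ρ z ≠ 0)
    (η v : EuclideanSpace ℂ (Fin 2) → EuclideanSpace ℂ (Fin 2))
    (hηsm : ContDiffOn ℝ (⊤ : ℕ∞) η U₀) (hvsm : ContDiffOn ℝ (⊤ : ℕ∞) v U₀)
    (hηunit : ∀ ζ ∈ U₀, ‖η ζ‖ = 1)
    (hηout : ∀ ζ ∈ U₀, 0 < fderiv ℝ ρ ζ (η ζ))
    (hηnormal : ∀ ζ ∈ U₀, ∀ w, (inner ℂ (η ζ) w : ℂ).re = 0 → fderiv ℝ ρ ζ w = 0)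
    (hvunit : ∀ ζ ∈ U₀, ‖v ζ‖ = 1)
    (hvtang : ∀ ζ ∈ U₀, (inner ℂ (η ζ) (v ζ) : ℂ) = 0) :
    ∃ (𝒰 : Set (EuclideanSpace ℂ (Fin 2))) (c₁ : ℝ),
      IsOpen 𝒰 ∧ {z | ρ z = 0} ⊆ 𝒰 ∧ 𝒰 ⊆ U₀ ∧ 0 < c₁ ∧
      (∀ z ∈ 𝒰, ∀ ζ ∈ 𝒰,
        (1 / c₁) * kdist η v ζ z ≤ kdist η v z ζ ∧ kdist η v z ζ ≤ c₁ * kdist η v ζ z) ∧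
      (∀ z ∈ 𝒰, ∀ ζ ∈ 𝒰, ∀ ξ ∈ 𝒰,
        kdist η v z ζ ≤ c₁ * (kdist η v z ξ + kdist η v ξ ζ)) := by
  classical
  set bD := {z | ρ z = 0} with hbDdef
  have hbDclosed : IsClosed bD := isClosed_eq hρ.continuous continuous_const
  have hbDbd : Bornology.IsBounded bD :=
    (sublevel_bounded hconv.convexOn hbd hne).subset (fun z hz => le_of_eq hz)
  have hbDcpt : IsCompact bD := Metric.isCompact_of_isClosed_isBounded hbDclosed hbDbd
  obtain ⟨ε, hεpos, hthick⟩ := hbDcpt.exists_cthickening_subset_open hU₀ hbDU₀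
  set K := Metric.cthickening ε bD with hKdef
  have hKcpt : IsCompact K :=
    Metric.isCompact_of_isClosed_isBounded Metric.isClosed_cthickening hbDbd.cthickening
  set 𝒰 := Metric.thickening ε bD with h𝒰def
  have h𝒰K : 𝒰 ⊆ K := Metric.thickening_subset_cthickening ε bD
  have hKU₀ : K ⊆ U₀ := hthick
  have h𝒰U₀ : 𝒰 ⊆ U₀ := h𝒰K.trans hKU₀
  obtain ⟨L, hL1, hLip⟩ := exists_lip hU₀ hηsm hηunit hKcpt hKU₀
  obtain ⟨D0, hD0⟩ := Metric.isBounded_iff.mp hKcpt.isBounded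
  set D : ℝ := max D0 1 with hDdef
  have hD1 : 1 ≤ D := le_max_right _ _
  have hDbound : ∀ x ∈ 𝒰, ∀ y ∈ 𝒰, ‖x - y‖ ≤ D := by
    intro x hx y hy
    rw [← dist_eq_norm]
    exact le_trans (hD0 (h𝒰K hx) (h𝒰K hy)) (le_max_left _ _)
  set c₁ : ℝ := 1 + (L + 2) * (D + 1) with hc₁def
  have hc₁pos : 0 < c₁ := by nlinarith
  have hkd : ∀ z ∈ 𝒰, ∀ ζ, kdist η v z ζ
      = max ‖(inner ℂ (η z) (ζ - z) : ℂ)‖ (‖(inner ℂ (v z) (ζ - z) : ℂ)‖ ^ 2) := by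
    intro z hz ζ
    exact kdist_eq (hηunit z (h𝒰U₀ hz)) (hvunit z (h𝒰U₀ hz)) (hvtang z (h𝒰U₀ hz)) ζ
  have hnn : ∀ z ∈ 𝒰, ∀ ζ, 0 ≤ kdist η v z ζ := by
    intro z hz ζ
    rw [hkd z hz ζ]
    exact le_trans (norm_nonneg _) (le_max_left _ _)
  have hd2 : ∀ z ∈ 𝒰, ∀ ζ ∈ 𝒰, ‖ζ - z‖ ^ 2 ≤ (D + 1) * kdist η v z ζ := by
    intro z hz ζ hζ
    set a : ℝ := ‖(inner ℂ (η z) (ζ - z) : ℂ)‖ with ha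
    set b : ℝ := ‖(inner ℂ (v z) (ζ - z) : ℂ)‖ with hb
    have hpar : ‖ζ - z‖ ^ 2 = a ^ 2 + b ^ 2 :=
      normsq (hηunit z (h𝒰U₀ hz)) (hvunit z (h𝒰U₀ hz)) (hvtang z (h𝒰U₀ hz)) (ζ - z)
    have hδ : kdist η v z ζ = max a (b ^ 2) := hkd z hz ζ
    have haδ : a ≤ kdist η v z ζ := by rw [hδ]; exact le_max_left _ _
    have hbδ : b ^ 2 ≤ kdist η v z ζ := by rw [hδ]; exact le_max_right _ _
    have haD : a ≤ D := by
      calc a ≤ ‖η z‖ * ‖ζ - z‖ := norm_inner_le_norm _ _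
        _ = ‖ζ - z‖ := by rw [hηunit z (h𝒰U₀ hz), one_mul]
        _ ≤ D := hDbound ζ hζ z hz
    have ha0 : 0 ≤ a := norm_nonneg _
    nlinarith
  have hsym : ∀ z ∈ 𝒰, ∀ ζ ∈ 𝒰, kdist η v ζ z ≤ c₁ * kdist η v z ζ := by
    intro z hz ζ hζ
    set δ : ℝ := kdist η v z ζ with hδdef
    have hδnn : 0 ≤ δ := hnn z hz ζ
    have hδeq : δ = max ‖(inner ℂ (η z) (ζ - z) : ℂ)‖ (‖(inner ℂ (v z) (ζ - z) : ℂ)‖ ^ 2) :=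
      hkd z hz ζ
    have hlamδ : ‖(inner ℂ (η z) (ζ - z) : ℂ)‖ ≤ δ := by rw [hδeq]; exact le_max_left _ _
    have hdsq : ‖ζ - z‖ ^ 2 ≤ (D + 1) * δ := hd2 z hz ζ hζ
    rw [hkd ζ hζ z]
    apply max_le
    · have hsplit : (inner ℂ (η ζ) (z - ζ) : ℂ)
          = inner ℂ (η z) (z - ζ) + inner ℂ (η ζ - η z) (z - ζ) := by
        rw [inner_sub_left]; ring
      have h1 : ‖(inner ℂ (η z) (z - ζ) : ℂ)‖ = ‖(inner ℂ (η z) (ζ - z) : ℂ)‖ := by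
        have hneg : (z - ζ) = -(ζ - z) := by abel
        rw [hneg, inner_neg_right, norm_neg]
      have h2 : ‖(inner ℂ (η ζ - η z) (z - ζ) : ℂ)‖ ≤ L * ‖ζ - z‖ ^ 2 := by
        calc ‖(inner ℂ (η ζ - η z) (z - ζ) : ℂ)‖
            ≤ ‖η ζ - η z‖ * ‖z - ζ‖ := norm_inner_le_norm _ _
          _ ≤ (L * ‖ζ - z‖) * ‖z - ζ‖ := by
              apply mul_le_mul_of_nonneg_right _ (norm_nonneg _)
              exact hLip ζ (h𝒰K hζ) z (h𝒰K hz)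
          _ = L * ‖ζ - z‖ ^ 2 := by rw [norm_sub_rev z ζ]; ring
      have h3 : ‖(inner ℂ (η ζ) (z - ζ) : ℂ)‖
          ≤ ‖(inner ℂ (η z) (ζ - z) : ℂ)‖ + L * ‖ζ - z‖ ^ 2 := by
        rw [hsplit]
        calc ‖(inner ℂ (η z) (z - ζ) : ℂ) + (inner ℂ (η ζ - η z) (z - ζ) : ℂ)‖
            ≤ ‖(inner ℂ (η z) (z - ζ) : ℂ)‖ + ‖(inner ℂ (η ζ - η z) (z - ζ) : ℂ)‖ :=
              norm_add_le _ _
          _ ≤ ‖(inner ℂ (η z) (ζ - z) : ℂ)‖ + L * ‖ζ - z‖ ^ 2 := by rw [h1]; linarith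
      nlinarith
    · have h1 : ‖(inner ℂ (v ζ) (z - ζ) : ℂ)‖ ≤ ‖z - ζ‖ := by
        calc ‖(inner ℂ (v ζ) (z - ζ) : ℂ)‖ ≤ ‖v ζ‖ * ‖z - ζ‖ := norm_inner_le_norm _ _
          _ = ‖z - ζ‖ := by rw [hvunit ζ (h𝒰U₀ hζ), one_mul]
      have h2 : ‖(inner ℂ (v ζ) (z - ζ) : ℂ)‖ ^ 2 ≤ ‖ζ - z‖ ^ 2 := by
        rw [norm_sub_rev ζ z]
        exact pow_le_pow_left₀ (norm_nonneg _) h1 2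
      nlinarith
  have htri : ∀ z ∈ 𝒰, ∀ ζ ∈ 𝒰, ∀ ξ ∈ 𝒰,
      kdist η v z ζ ≤ c₁ * (kdist η v z ξ + kdist η v ξ ζ) := by
    intro z hz ζ hζ ξ hξ
    set δ₁ : ℝ := kdist η v z ξ with hδ₁def
    set δ₂ : ℝ := kdist η v ξ ζ with hδ₂def
    have hδ₁nn : 0 ≤ δ₁ := hnn z hz ξ
    have hδ₂nn : 0 ≤ δ₂ := hnn ξ hξ ζ
    have ha₁ : ‖(inner ℂ (η z) (ξ - z) : ℂ)‖ ≤ δ₁ := by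
      rw [hδ₁def, hkd z hz ξ]; exact le_max_left _ _
    have ha₂ : ‖(inner ℂ (η ξ) (ζ - ξ) : ℂ)‖ ≤ δ₂ := by
      rw [hδ₂def, hkd ξ hξ ζ]; exact le_max_left _ _
    have hd₁ : ‖ξ - z‖ ^ 2 ≤ (D + 1) * δ₁ := hd2 z hz ξ hξ
    have hd₂ : ‖ζ - ξ‖ ^ 2 ≤ (D + 1) * δ₂ := hd2 ξ hξ ζ hζ
    rw [hkd z hz ζ]
    apply max_le
    · have hsplit : (inner ℂ (η z) (ζ - z) : ℂ)
          = inner ℂ (η z) (ξ - z) + inner ℂ (η ξ) (ζ - ξ) + inner ℂ (η z - η ξ) (ζ - ξ) := by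
        rw [inner_sub_left]
        have hdec : (ζ - z : EuclideanSpace ℂ (Fin 2)) = (ξ - z) + (ζ - ξ) := by abel
        rw [hdec, inner_add_right]
        ring
      have hcross : ‖(inner ℂ (η z - η ξ) (ζ - ξ) : ℂ)‖ ≤ L * (‖ξ - z‖ * ‖ζ - ξ‖) := by
        calc ‖(inner ℂ (η z - η ξ) (ζ - ξ) : ℂ)‖
            ≤ ‖η z - η ξ‖ * ‖ζ - ξ‖ := norm_inner_le_norm _ _
          _ ≤ (L * ‖z - ξ‖) * ‖ζ - ξ‖ := by
              apply mul_le_mul_of_nonneg_right _ (norm_nonneg _)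
              exact hLip z (h𝒰K hz) ξ (h𝒰K hξ)
          _ = L * (‖ξ - z‖ * ‖ζ - ξ‖) := by rw [norm_sub_rev z ξ]; ring
      have hquad : ‖ξ - z‖ * ‖ζ - ξ‖ ≤ (D + 1) * δ₁ + (D + 1) * δ₂ := by
        nlinarith [sq_nonneg (‖ξ - z‖ - ‖ζ - ξ‖), norm_nonneg (ξ - z), norm_nonneg (ζ - ξ)]
      have hLnn : (0:ℝ) ≤ L := by linarith
      have h5 : L * (‖ξ - z‖ * ‖ζ - ξ‖) ≤ L * ((D + 1) * δ₁ + (D + 1) * δ₂) :=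
        mul_le_mul_of_nonneg_left hquad hLnn
      have htot : ‖(inner ℂ (η z) (ζ - z) : ℂ)‖
          ≤ δ₁ + δ₂ + L * ((D + 1) * δ₁ + (D + 1) * δ₂) := by
        rw [hsplit]
        calc ‖(inner ℂ (η z) (ξ - z) : ℂ) + (inner ℂ (η ξ) (ζ - ξ) : ℂ)
              + (inner ℂ (η z - η ξ) (ζ - ξ) : ℂ)‖
            ≤ ‖(inner ℂ (η z) (ξ - z) : ℂ) + (inner ℂ (η ξ) (ζ - ξ) : ℂ)‖
              + ‖(inner ℂ (η z - η ξ) (ζ - ξ) : ℂ)‖ := norm_add_le _ _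
          _ ≤ δ₁ + δ₂ + L * ((D + 1) * δ₁ + (D + 1) * δ₂) := by
              have hn2 := norm_add_le ((inner ℂ (η z) (ξ - z) : ℂ)) ((inner ℂ (η ξ) (ζ - ξ) : ℂ))
              linarith [hcross]
      nlinarith
    · have h1 : ‖(inner ℂ (v z) (ζ - z) : ℂ)‖ ≤ ‖ζ - z‖ := by
        calc ‖(inner ℂ (v z) (ζ - z) : ℂ)‖ ≤ ‖v z‖ * ‖ζ - z‖ := norm_inner_le_norm _ _
          _ = ‖ζ - z‖ := by rw [hvunit z (h𝒰U₀ hz), one_mul]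
      have h2 : ‖ζ - z‖ ≤ ‖ζ - ξ‖ + ‖ξ - z‖ := by
        have hdt := dist_triangle ζ ξ z
        simpa [dist_eq_norm] using hdt
      have h3 : ‖(inner ℂ (v z) (ζ - z) : ℂ)‖ ^ 2 ≤ (‖ζ - ξ‖ + ‖ξ - z‖) ^ 2 :=
        pow_le_pow_left₀ (norm_nonneg _) (le_trans h1 h2) 2
      have hc2 : 2 * (D + 1) ≤ c₁ := by nlinarith
      have hsum : (0:ℝ) ≤ δ₁ + δ₂ := by linarith
      have hsq : (‖ζ - ξ‖ + ‖ξ - z‖) ^ 2 ≤ 2 * (D + 1) * (δ₁ + δ₂) := by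
        nlinarith [sq_nonneg (‖ζ - ξ‖ - ‖ξ - z‖)]
      calc ‖(inner ℂ (v z) (ζ - z) : ℂ)‖ ^ 2 ≤ (‖ζ - ξ‖ + ‖ξ - z‖) ^ 2 := h3
        _ ≤ 2 * (D + 1) * (δ₁ + δ₂) := hsq
        _ ≤ c₁ * (δ₁ + δ₂) := mul_le_mul_of_nonneg_right hc2 hsum
  refine ⟨𝒰, c₁, Metric.isOpen_thickening, Metric.self_subset_thickening hεpos bD,
    h𝒰U₀, hc₁pos, ?_, htri⟩
  intro z hz ζ hζ
  constructor
  · have h := hsym z hz ζ hζ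
    rw [div_mul_eq_mul_div, div_le_iff₀ hc₁pos, one_mul]
    linarith
  · exact hsym ζ hζ z hz

end
end

section
/- For every integer k ≥ 1, every q ∈ [1,∞) and all real numbers 0 < θ₁ < θ₂ < 1, there exists a constant C > 0 (depending only on k, q, θ₁, θ₂) such that for every R > 0, every function h holomorphic on a neighborhood of the closed disc {ξ ∈ ℂ : |ξ| ≤ R}, and all pairwise distinct λ₁, …, λ_k in the closed disc {|ξ| ≤ θ₁R}, one has |h[λ₁, …, λ_k]|^q ≤ C · R^{−(k−1)q−2} · ∫_{θ₂R ≤ |ξ| ≤ R} |h(ξ)|^q dV(ξ), where dV is the Lebesgue measure on ℂ. -/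
noncomputable section

open MeasureTheory Metric Set Real

lemma divDiff_singleton (h : ℂ → ℂ) (z : ℂ) : divDiff h [z] = h z := by
  simp [divDiff]

lemma divDiff_cons_cons (h : ℂ → ℂ) (z w : ℂ) (l : List ℂ) :
    divDiff h (z :: w :: l) =
      (divDiff h (z :: (w :: l).dropLast) - divDiff h (w :: l)) /
        (z - (w :: l).getLast (List.cons_ne_nil w l)) := by
  rw [divDiff]

def nodeProd (l : List ℂ) (ξ : ℂ) : ℂ := (l.map (fun μ => ξ - μ)).prod

lemma continuous_nodeProd (l : List ℂ) : Continuous (fun ξ => nodeProd l ξ) := by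
  induction l with
  | nil => simpa [nodeProd] using continuous_const
  | cons a l ih =>
      simp only [nodeProd, List.map_cons, List.prod_cons]
      exact (continuous_id.sub continuous_const).mul ih

lemma nodeProd_ne_zero {l : List ℂ} {ξ : ℂ} {r : ℝ}
    (hξ : ξ ∈ sphere (0:ℂ) r) (hl : ∀ x ∈ l, x ∈ ball (0:ℂ) r) :
    nodeProd l ξ ≠ 0 := by
  apply List.prod_ne_zero
  intro hcon
  rw [List.mem_map] at hcon
  obtain ⟨μ, hμ, hc⟩ := hcon
  have h1 := hl μ hμ
  have hμξ : ξ = μ := sub_eq_zero.mp hc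
  rw [mem_sphere_iff_norm, sub_zero] at hξ
  rw [mem_ball, dist_zero_right, ← hμξ, hξ] at h1
  exact absurd h1 (lt_irrefl r)

lemma continuousOn_ker_smul {h : ℂ → ℂ} {r : ℝ}
    (hc : ContinuousOn h (sphere (0:ℂ) r)) {l : List ℂ}
    (hl : ∀ x ∈ l, x ∈ ball (0:ℂ) r) :
    ContinuousOn (fun ξ => (nodeProd l ξ)⁻¹ * h ξ) (sphere (0:ℂ) r) := by
  apply ContinuousOn.mul _ hc
  exact ContinuousOn.inv₀ (continuous_nodeProd l).continuousOn
    (fun ξ hξ => nodeProd_ne_zero hξ hl)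

lemma nodeProd_dropLast_mul {l : List ℂ} (hne : l ≠ []) (ξ : ℂ) :
    nodeProd l ξ = nodeProd l.dropLast ξ * (ξ - l.getLast hne) := by
  conv_lhs => rw [← List.dropLast_append_getLast hne]
  simp [nodeProd]

lemma divDiff_eq_circleIntegral {h : ℂ → ℂ} {r : ℝ} (hr : 0 < r)
    (hd : DiffContOnCl ℂ h (ball (0:ℂ) r)) (l : List ℂ) (hne : l ≠ [])
    (hp : l.Pairwise (· ≠ ·)) (hmem : ∀ x ∈ l, x ∈ ball (0:ℂ) r) :
    divDiff h l = (2 * π * Complex.I)⁻¹ * ∮ z in C(0, r), (nodeProd l z)⁻¹ * h z := by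
  have hsc : ContinuousOn h (sphere (0:ℂ) r) := by
    apply hd.continuousOn.mono
    rw [closure_ball (0:ℂ) hr.ne']
    exact sphere_subset_closedBall
  have h2pi : (2 * (π:ℂ) * Complex.I) ≠ 0 := by
    simp [Real.pi_ne_zero, Complex.I_ne_zero, Complex.ofReal_ne_zero]
  suffices H : ∀ n (l : List ℂ), l.Pairwise (· ≠ ·) → (∀ x ∈ l, x ∈ ball (0:ℂ) r) →
      l.length = n → ∀ hne : l ≠ [],
      divDiff h l = (2 * π * Complex.I)⁻¹ * ∮ z in C(0, r), (nodeProd l z)⁻¹ * h z by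
    exact H l.length l hp hmem rfl hne
  intro n
  induction n using Nat.strong_induction_on with
  | _ n IH =>
  intro l hp hmem hlen hne
  match l, hne with
  | [], hne => exact absurd rfl hne
  | [z], _ =>
      have hz : z ∈ ball (0:ℂ) r := hmem z (by simp)
      have := hd.circleIntegral_sub_inv_smul hz
      rw [divDiff_singleton]
      have heq : (∮ ξ in C(0, r), (nodeProd [z] ξ)⁻¹ * h ξ)
          = ∮ ξ in C(0, r), (ξ - z)⁻¹ • h ξ := by
        apply circleIntegral.integral_congr hr.le
        intro ξ _
        simp [nodeProd, smul_eq_mul]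
      rw [heq, this, smul_eq_mul, ← mul_assoc, inv_mul_cancel₀ h2pi, one_mul]
  | z :: w :: l', _ =>
      set L := z :: w :: l' with hL
      set tail := w :: l' with htail
      set init := z :: tail.dropLast with hinit
      have hlast_mem : tail.getLast (List.cons_ne_nil w l') ∈ tail := List.getLast_mem _
      have hzlast : z ≠ tail.getLast (List.cons_ne_nil w l') :=
        (List.pairwise_cons.mp hp).1 _ hlast_mem
      have hinit_sub : List.Sublist init L := by
        have : init = L.dropLast := by simp [hinit, hL, htail]
        rw [this]; exact List.dropLast_sublist L
      have htail_sub : List.Sublist tail L := List.sublist_cons_self z tail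
      have hinit_mem : ∀ x ∈ init, x ∈ ball (0:ℂ) r :=
        fun x hx => hmem x (hinit_sub.subset hx)
      have htail_mem : ∀ x ∈ tail, x ∈ ball (0:ℂ) r :=
        fun x hx => hmem x (htail_sub.subset hx)
      have hinit_p : init.Pairwise (· ≠ ·) := hp.sublist hinit_sub
      have htail_p : tail.Pairwise (· ≠ ·) := hp.sublist htail_sub
      have hlen1 : init.length < n := by
        simp only [hinit, htail, hL, List.length_cons, List.length_dropLast] at hlen ⊢
        omega
      have hlen2 : tail.length < n := by
        simp only [hL, htail, List.length_cons] at hlen ⊢; omega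
      have IH1 := IH init.length hlen1 init hinit_p hinit_mem rfl (by simp [hinit])
      have IH2 := IH tail.length hlen2 tail htail_p htail_mem rfl (by simp [htail])
      -- integrability
      have int1 : CircleIntegrable (fun ξ => (nodeProd init ξ)⁻¹ * h ξ) 0 r :=
        (continuousOn_ker_smul hsc hinit_mem).circleIntegrable hr.le
      have int2 : CircleIntegrable (fun ξ => (nodeProd tail ξ)⁻¹ * h ξ) 0 r :=
        (continuousOn_ker_smul hsc htail_mem).circleIntegrable hr.le
      -- pointwise identity on the sphere
      have key : (∮ ξ in C(0, r), (nodeProd init ξ)⁻¹ * h ξ)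
            - (∮ ξ in C(0, r), (nodeProd tail ξ)⁻¹ * h ξ)
          = (z - tail.getLast (List.cons_ne_nil w l')) *
              ∮ ξ in C(0, r), (nodeProd L ξ)⁻¹ * h ξ := by
        rw [← circleIntegral.integral_sub int1 int2, ← circleIntegral.integral_const_mul]
        apply circleIntegral.integral_congr hr.le
        intro ξ hξ
        have hNL : nodeProd L ξ ≠ 0 := nodeProd_ne_zero hξ hmem
        have hNi : nodeProd init ξ ≠ 0 := nodeProd_ne_zero hξ hinit_mem
        have hNt : nodeProd tail ξ ≠ 0 := nodeProd_ne_zero hξ htail_mem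
        have e1 : nodeProd L ξ = nodeProd init ξ * (ξ - tail.getLast (List.cons_ne_nil w l')) := by
          have : L.getLast (by simp [hL]) = tail.getLast (List.cons_ne_nil w l') := by
            simp [hL, htail, List.getLast_cons]
          rw [← this, nodeProd_dropLast_mul (by simp [hL] : L ≠ []) ξ]
          rfl
        have e2 : nodeProd L ξ = (ξ - z) * nodeProd tail ξ := by
          simp [nodeProd, hL, htail]
        have hξl : ξ - tail.getLast (List.cons_ne_nil w l') ≠ 0 := by
          intro hc; rw [e1, hc, mul_zero] at hNL; exact hNL rfl
        have hξz : ξ - z ≠ 0 := by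
          intro hc; rw [e2, hc, zero_mul] at hNL; exact hNL rfl
        have i1 : (nodeProd init ξ)⁻¹
            = (ξ - tail.getLast (List.cons_ne_nil w l')) * (nodeProd L ξ)⁻¹ := by
          rw [e1]; field_simp
        have i2 : (nodeProd tail ξ)⁻¹ = (ξ - z) * (nodeProd L ξ)⁻¹ := by
          rw [e2]; field_simp
        simp only []
        rw [i1, i2]
        ring
      have hdd : divDiff h L = (divDiff h init - divDiff h tail) /
          (z - tail.getLast (List.cons_ne_nil w l')) := divDiff_cons_cons h z w l'
      rw [hdd, IH1, IH2, ← mul_sub, key]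
      have hzl : z - tail.getLast (List.cons_ne_nil w l') ≠ 0 := sub_ne_zero.mpr hzlast
      field_simp

lemma pow_le_list_prod {c : ℝ} (hc : 0 ≤ c) :
    ∀ (l : List ℝ), (∀ x ∈ l, c ≤ x) → c ^ l.length ≤ l.prod := by
  intro l
  induction l with
  | nil => simp
  | cons a l ih =>
      intro hl
      simp only [List.length_cons, List.prod_cons, pow_succ]
      have h1 := hl a (by simp)
      have h2 := ih (fun x hx => hl x (List.mem_cons_of_mem a hx))
      calc c ^ l.length * c ≤ l.prod * a := by
            apply mul_le_mul h2 h1 hc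
            exact le_trans (pow_nonneg hc _) h2
        _ = a * l.prod := mul_comm _ _

lemma abs_nodeProd_ge {l : List ℂ} {ξ : ℂ} {r s : ℝ} (hs : 0 ≤ s) (hsr : s < r)
    (hξ : ξ ∈ sphere (0:ℂ) r) (hl : ∀ x ∈ l, ‖x‖ ≤ s) :
    (r - s) ^ l.length ≤ ‖nodeProd l ξ‖ := by
  have habs : ∀ m : List ℂ, ‖(m.map (fun μ => ξ - μ)).prod‖
      = (m.map (fun μ => ‖ξ - μ‖)).prod := by
    intro m
    induction m with
    | nil => simp
    | cons a m ih => simp [map_mul, ih]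
  rw [nodeProd, habs]
  have hlen : (l.map (fun μ => ‖ξ - μ‖)).length = l.length := by simp
  rw [← hlen]
  apply pow_le_list_prod (by linarith)
  intro x hx
  simp only [List.mem_map] at hx
  obtain ⟨μ, hμ, rfl⟩ := hx
  have h1 : ‖ξ‖ = r := by simpa [Complex.dist_eq] using hξ
  calc r - s ≤ ‖ξ‖ - ‖μ‖ := by
        have := hl μ hμ; rw [h1]; linarith
    _ ≤ ‖ξ - μ‖ := norm_sub_norm_le ξ μ

lemma per_radius_bound {h : ℂ → ℂ} {r s : ℝ} (hs : 0 ≤ s) (hsr : s < r) (hr : 0 < r)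
    (hd : DiffContOnCl ℂ h (ball (0:ℂ) r)) (l : List ℂ) (hne : l ≠ [])
    (hp : l.Pairwise (· ≠ ·)) (hmem : ∀ x ∈ l, ‖x‖ ≤ s) :
    ‖divDiff h l‖ * (2 * π) * (r - s) ^ l.length ≤
      r * ∫ t in (0:ℝ)..(2*π), ‖h (circleMap 0 r t)‖ := by
  have hsc : ContinuousOn h (sphere (0:ℂ) r) := by
    apply hd.continuousOn.mono
    rw [closure_ball (0:ℂ) hr.ne']
    exact sphere_subset_closedBall
  have hmem' : ∀ x ∈ l, x ∈ ball (0:ℂ) r := by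
    intro x hx
    have := hmem x hx
    simp only [mem_ball, Complex.dist_eq, sub_zero]
    calc ‖x‖ ≤ s := this
      _ < r := hsr
  rw [divDiff_eq_circleIntegral hr hd l hne hp hmem']
  -- the integrand composed with circleMap is continuous
  have hcont : ContinuousOn (fun ξ => (nodeProd l ξ)⁻¹ * h ξ) (sphere (0:ℂ) r) :=
    continuousOn_ker_smul hsc hmem'
  have hcm : ∀ t : ℝ, circleMap 0 r t ∈ sphere (0:ℂ) r := fun t => circleMap_mem_sphere 0 hr.le t
  have hcont2 : Continuous fun t : ℝ => (nodeProd l (circleMap 0 r t))⁻¹ * h (circleMap 0 r t) := by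
    have := hcont.comp_continuous (continuous_circleMap 0 r) hcm
    exact this
  have hcont3 : Continuous fun t : ℝ => ‖h (circleMap 0 r t)‖ := by
    have : Continuous fun t : ℝ => h (circleMap 0 r t) :=
      (hsc.comp_continuous (continuous_circleMap 0 r) hcm)
    exact continuous_norm.comp this
  -- norm of the circle integral
  have hnorm : ‖∮ ξ in C(0, r), (nodeProd l ξ)⁻¹ * h ξ‖ ≤
      ∫ t in (0:ℝ)..(2*π), r * ((r - s) ^ l.length)⁻¹ * ‖h (circleMap 0 r t)‖ := by
    rw [circleIntegral]
    refine (intervalIntegral.norm_integral_le_integral_norm (by positivity)).trans ?_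
    apply intervalIntegral.integral_mono_on (by positivity)
    · apply Continuous.intervalIntegrable
      have : Continuous fun u : ℝ =>
          deriv (circleMap 0 r) u • ((nodeProd l (circleMap 0 r u))⁻¹ * h (circleMap 0 r u)) := by
        simp only [deriv_circleMap]
        exact (((continuous_circleMap 0 r).mul continuous_const).mul hcont2)
      exact this.norm
    · exact ((continuous_const.mul hcont3).intervalIntegrable _ _)
    · intro t ht
      have hprod : (r - s) ^ l.length ≤ ‖nodeProd l (circleMap 0 r t)‖ :=
        abs_nodeProd_ge hs hsr (hcm t) hmem
      have hrs : (0:ℝ) < r - s := by linarith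
      have hNP : (0:ℝ) < (r - s) ^ l.length := by positivity
      rw [norm_smul, deriv_circleMap]
      simp only [norm_mul, norm_circleMap_zero, Complex.norm_I, mul_one,
        abs_of_pos hr, norm_inv]
      rw [mul_assoc]
      apply mul_le_mul_of_nonneg_left _ hr.le
      apply mul_le_mul_of_nonneg_right _ (norm_nonneg _)
      exact inv_anti₀ hNP hprod
  have hInt : (∫ t in (0:ℝ)..(2*π), r * ((r - s) ^ l.length)⁻¹ * ‖h (circleMap 0 r t)‖)
      = r * ((r - s) ^ l.length)⁻¹ * ∫ t in (0:ℝ)..(2*π), ‖h (circleMap 0 r t)‖ := by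
    rw [← intervalIntegral.integral_const_mul]
  have habs2pi : ‖(2 * (π:ℂ) * Complex.I)⁻¹‖ = (2*π)⁻¹ := by
    rw [norm_inv]
    norm_num [Complex.norm_real, Real.norm_eq_abs, abs_of_pos Real.pi_pos]
  have hrs : (0:ℝ) < r - s := by linarith
  have hNP : (0:ℝ) < (r - s) ^ l.length := by positivity
  have hπ : (0:ℝ) < 2 * π := by positivity
  rw [norm_mul, habs2pi]
  rw [hInt] at hnorm
  have hfin : ‖∮ ξ in C(0, r), (nodeProd l ξ)⁻¹ * h ξ‖ ≤
      r * ((r - s) ^ l.length)⁻¹ * ∫ t in (0:ℝ)..(2*π), ‖h (circleMap 0 r t)‖ :=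
    hnorm
  calc (2*π)⁻¹ * ‖∮ ξ in C(0, r), (nodeProd l ξ)⁻¹ * h ξ‖ * (2 * π) *
        (r - s) ^ l.length
      ≤ (2*π)⁻¹ * (r * ((r - s) ^ l.length)⁻¹ *
          ∫ t in (0:ℝ)..(2*π), ‖h (circleMap 0 r t)‖) * (2 * π) *
          (r - s) ^ l.length := by
        apply mul_le_mul_of_nonneg_right _ hNP.le
        apply mul_le_mul_of_nonneg_right _ hπ.le
        exact mul_le_mul_of_nonneg_left hfin (by positivity)
    _ = r * ∫ t in (0:ℝ)..(2*π), ‖h (circleMap 0 r t)‖ := by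
        field_simp

lemma jensen_interval {g : ℝ → ℝ} (hg : Continuous g) (hgnn : ∀ t, 0 ≤ g t) {q : ℝ} (hq : 1 ≤ q) :
    (∫ t in (0:ℝ)..(2*π), g t) ^ q ≤ (2*π) ^ (q - 1) * ∫ t in (0:ℝ)..(2*π), g t ^ q := by
  have hπ : (0:ℝ) < 2 * π := by positivity
  set μ := volume.restrict (Ioc (0:ℝ) (2*π)) with hμ
  have hμuniv : μ univ = ENNReal.ofReal (2*π) := by
    rw [hμ, Measure.restrict_apply_univ, Real.volume_Ioc]
    norm_num
  haveI : IsFiniteMeasure μ := ⟨by rw [hμuniv]; exact ENNReal.ofReal_lt_top⟩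
  haveI : NeZero μ := by
    refine ⟨fun hc => ?_⟩
    have := hμuniv
    rw [hc] at this
    simp only [Measure.coe_zero, Pi.zero_apply] at this
    rw [eq_comm, ENNReal.ofReal_eq_zero] at this
    linarith
  have hconv : ConvexOn ℝ (Ici (0:ℝ)) (fun x : ℝ => x ^ q) := convexOn_rpow hq
  have hrpow_cont : Continuous (fun x : ℝ => x ^ q) := by
    rw [continuous_iff_continuousAt]
    intro x
    exact Real.continuousAt_rpow_const x q (Or.inr (by linarith))
  have hfi : Integrable g μ := (hg.integrableOn_Ioc : IntegrableOn g _ _)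
  have hgi : Integrable ((fun x : ℝ => x ^ q) ∘ g) μ :=
    ((hrpow_cont.comp hg).integrableOn_Ioc : IntegrableOn _ _ _)
  have havg := hconv.map_average_le hrpow_cont.continuousOn isClosed_Ici
    (Filter.Eventually.of_forall (fun t => hgnn t)) hfi hgi
  rw [average_eq, average_eq, measureReal_def, hμuniv, ENNReal.toReal_ofReal hπ.le] at havg
  simp only [smul_eq_mul, Function.comp] at havg
  have hint_eq : (∫ t in (0:ℝ)..(2*π), g t) = ∫ t, g t ∂μ := by
    rw [intervalIntegral.integral_of_le hπ.le]
  have hint_eq2 : (∫ t in (0:ℝ)..(2*π), g t ^ q) = ∫ t, g t ^ q ∂μ := by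
    rw [intervalIntegral.integral_of_le hπ.le]
  rw [hint_eq, hint_eq2]
  have hIμ : 0 ≤ ∫ t, g t ∂μ := integral_nonneg (fun t => hgnn t)
  calc (∫ t, g t ∂μ) ^ q = ((2*π) * ((2*π)⁻¹ * ∫ t, g t ∂μ)) ^ q := by
        rw [← mul_assoc, mul_inv_cancel₀ hπ.ne', one_mul]
    _ = (2*π) ^ q * ((2*π)⁻¹ * ∫ t, g t ∂μ) ^ q := by
        rw [Real.mul_rpow hπ.le (by positivity)]
    _ ≤ (2*π) ^ q * ((2*π)⁻¹ * ∫ t, g t ^ q ∂μ) := by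
        apply mul_le_mul_of_nonneg_left _ (by positivity)
        exact havg
    _ = (2*π) ^ (q-1) * ∫ t, g t ^ q ∂μ := by
        rw [Real.rpow_sub hπ, Real.rpow_one]
        ring

lemma per_radius_q_bound {h : ℂ → ℂ} {r s : ℝ} (hs : 0 ≤ s) (hsr : s < r) (hr : 0 < r)
    (hd : DiffContOnCl ℂ h (ball (0:ℂ) r)) (l : List ℂ) (hne : l ≠ [])
    (hp : l.Pairwise (· ≠ ·)) (hmem : ∀ x ∈ l, ‖x‖ ≤ s) {q : ℝ} (hq : 1 ≤ q) :
    2 * π * ‖divDiff h l‖ ^ q * ((r - s) ^ l.length / r) ^ q ≤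
      ∫ t in (0:ℝ)..(2*π), ‖h (circleMap 0 r t)‖ ^ q := by
  have hπ : (0:ℝ) < 2 * π := by positivity
  have hrs : (0:ℝ) < r - s := by linarith
  have hsc : ContinuousOn h (sphere (0:ℂ) r) := by
    apply hd.continuousOn.mono
    rw [closure_ball (0:ℂ) hr.ne']
    exact sphere_subset_closedBall
  have hcm : ∀ t : ℝ, circleMap 0 r t ∈ sphere (0:ℂ) r := fun t => circleMap_mem_sphere 0 hr.le t
  set G : ℝ → ℝ := fun t => ‖h (circleMap 0 r t)‖ with hG
  have hGc : Continuous G := by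
    have : Continuous fun t : ℝ => h (circleMap 0 r t) :=
      hsc.comp_continuous (continuous_circleMap 0 r) hcm
    exact continuous_norm.comp this
  have hGnn : ∀ t, 0 ≤ G t := fun t => norm_nonneg _
  set D := ‖divDiff h l‖ with hD
  have hDnn : 0 ≤ D := norm_nonneg _
  set X : ℝ := (r - s) ^ l.length / r with hX
  have hXpos : 0 < X := by positivity
  have hB := per_radius_bound hs hsr hr hd l hne hp hmem
  set m : ℝ := 2 * π * D * X with hm
  have hmnn : 0 ≤ m := by positivity
  have h1' : m * r ≤ (∫ t in (0:ℝ)..(2*π), G t) * r := by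
    calc m * r = D * (2*π) * (r - s) ^ l.length := by rw [hm, hX]; field_simp
      _ ≤ r * ∫ t in (0:ℝ)..(2*π), G t := hB
      _ = (∫ t in (0:ℝ)..(2*π), G t) * r := mul_comm _ _
  have h1 : m ≤ ∫ t in (0:ℝ)..(2*π), G t := le_of_mul_le_mul_right h1' hr
  have h2 : m ^ q ≤ (∫ t in (0:ℝ)..(2*π), G t) ^ q :=
    Real.rpow_le_rpow hmnn h1 (by linarith)
  have hJ := jensen_interval hGc hGnn hq
  have h3 : m ^ q ≤ (2*π) ^ (q-1) * ∫ t in (0:ℝ)..(2*π), G t ^ q := le_trans h2 hJ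
  have hmq : m ^ q = (2*π) ^ q * (D ^ q * X ^ q) := by
    rw [hm, Real.mul_rpow (by positivity) hXpos.le, Real.mul_rpow hπ.le hDnn]
    ring
  have key : (2*π) ^ q * (D ^ q * X ^ q) ≤ (2*π) ^ (q-1) * ∫ t in (0:ℝ)..(2*π), G t ^ q := by
    rw [← hmq]; exact h3
  have h2πq : ((2*π) : ℝ) ^ q = (2*π) ^ (q-1) * (2*π) := by
    conv_lhs => rw [show q = q - 1 + 1 by ring]
    rw [Real.rpow_add hπ, Real.rpow_one]
  calc 2 * π * D ^ q * X ^ q = (2*π) * (D ^ q * X ^ q) := by ring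
    _ ≤ ∫ t in (0:ℝ)..(2*π), G t ^ q := by
        rw [h2πq] at key
        have h4 : (2*π) ^ (q-1) * ((2*π) * (D ^ q * X ^ q)) ≤
            (2*π) ^ (q-1) * ∫ t in (0:ℝ)..(2*π), G t ^ q := by
          calc (2*π) ^ (q-1) * ((2*π) * (D ^ q * X ^ q))
              = (2*π) ^ (q-1) * (2*π) * (D ^ q * X ^ q) := by ring
            _ ≤ _ := key
        exact le_of_mul_le_mul_left h4 (by positivity)

lemma annulus_polar {g : ℂ → ℝ} {a b : ℝ} (ha : 0 < a) (hab : a ≤ b)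
    (hgc : ContinuousOn g (closedBall (0:ℂ) b)) :
    ((∫ ξ in {ξ : ℂ | a ≤ ‖ξ‖ ∧ ‖ξ‖ ≤ b}, g ξ)
      = ∫ r in Icc a b, r * ∫ t in (0:ℝ)..(2*π), g (circleMap 0 r t)) ∧
    IntegrableOn (fun r => r * ∫ t in (0:ℝ)..(2*π), g (circleMap 0 r t)) (Icc a b) := by
  have hπ : (0:ℝ) < π := Real.pi_pos
  set A := {ξ : ℂ | a ≤ ‖ξ‖ ∧ ‖ξ‖ ≤ b} with hA
  set S := Icc a b ×ˢ Ioo (-π) π with hS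
  have hAmeas : MeasurableSet A := by
    have : A = (fun ξ : ℂ => ‖ξ‖) ⁻¹' (Icc a b) := by ext ξ; simp [hA, mem_Icc]
    rw [this]
    exact (continuous_norm.measurable) measurableSet_Icc
  have hσ : Continuous fun p : ℝ × ℝ => Complex.polarCoord.symm p := by
    simp only [Complex.polarCoord_symm_apply]
    fun_prop
  have hcm : ∀ p : ℝ × ℝ, Complex.polarCoord.symm p = circleMap 0 p.1 p.2 := by
    intro p
    rw [Complex.polarCoord_symm_apply, circleMap]
    push_cast
    rw [Complex.exp_mul_I]
    ring
  have hsub : S ⊆ polarCoord.target := by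
    rw [hS, polarCoord_target]
    apply prod_mono_left
    intro x hx
    exact lt_of_lt_of_le ha hx.1
  have step1 : ∫ ξ in A, g ξ = ∫ p in polarCoord.target, p.1 • (A.indicator g
      (Complex.polarCoord.symm p)) := by
    rw [← integral_indicator hAmeas, ← Complex.integral_comp_polarCoord_symm (A.indicator g)]
  have step2 : (∫ p in polarCoord.target, p.1 • (A.indicator g (Complex.polarCoord.symm p)))
      = ∫ p in S, p.1 * g (Complex.polarCoord.symm p) := by
    have hSmeas : MeasurableSet S := by measurability
    calc (∫ p in polarCoord.target, p.1 • (A.indicator g (Complex.polarCoord.symm p)))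
        = ∫ p in polarCoord.target,
            S.indicator (fun p : ℝ × ℝ => p.1 * g (Complex.polarCoord.symm p)) p := ?_
      _ = ∫ p in polarCoord.target ∩ S, p.1 * g (Complex.polarCoord.symm p) :=
          setIntegral_indicator hSmeas
      _ = ∫ p in S, p.1 * g (Complex.polarCoord.symm p) := by
          rw [inter_eq_right.mpr hsub]
    apply setIntegral_congr_fun polarCoord.open_target.measurableSet
    intro p hp
    simp only []
    rw [polarCoord_target] at hp
    have hp1 : 0 < p.1 := hp.1
    have hp2 : p.2 ∈ Ioo (-π) π := hp.2
    have habs : ‖Complex.polarCoord.symm p‖ = p.1 := by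
      rw [Complex.norm_polarCoord_symm, abs_of_pos hp1]
    by_cases hmem : p.1 ∈ Icc a b
    · have h1 : Complex.polarCoord.symm p ∈ A := by
        rw [hA, mem_setOf_eq, habs]; exact ⟨hmem.1, hmem.2⟩
      have h2 : p ∈ S := by rw [hS]; exact ⟨hmem, hp2⟩
      rw [indicator_of_mem h1 g, indicator_of_mem h2, smul_eq_mul]
    · have h1 : Complex.polarCoord.symm p ∉ A := by
        rw [hA, mem_setOf_eq, habs]; exact fun hc => hmem ⟨hc.1, hc.2⟩
      have h2 : p ∉ S := by rw [hS]; exact fun hc => hmem hc.1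
      rw [indicator_of_notMem h1 g, indicator_of_notMem h2, smul_zero]
  -- integrability on the compact rectangle
  set F : ℝ × ℝ → ℝ := fun p => p.1 * g (Complex.polarCoord.symm p) with hF
  have hK : IsCompact (Icc a b ×ˢ Icc (-π) π) := isCompact_Icc.prod isCompact_Icc
  have hmaps : ∀ p ∈ Icc a b ×ˢ Icc (-π) π, Complex.polarCoord.symm p ∈ closedBall (0:ℂ) b := by
    intro p hp
    rw [mem_closedBall, Complex.dist_eq, sub_zero, Complex.norm_polarCoord_symm]
    rw [abs_of_pos (lt_of_lt_of_le ha hp.1.1)]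
    exact hp.1.2
  have hFc : ContinuousOn F (Icc a b ×ˢ Icc (-π) π) := by
    apply ContinuousOn.mul continuous_fst.continuousOn
    exact hgc.comp hσ.continuousOn hmaps
  have hFi : IntegrableOn F S := by
    apply (hFc.integrableOn_compact hK).mono_set
    rw [hS]
    exact prod_mono subset_rfl Ioo_subset_Icc_self
  have hFi' : Integrable F ((volume.restrict (Icc a b)).prod (volume.restrict (Ioo (-π) π))) := by
    rwa [Measure.prod_restrict, ← Measure.volume_eq_prod]
  have step3 : (∫ p in S, F p) = ∫ r in Icc a b, ∫ t in Ioo (-π) π, F (r, t) := by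
    rw [hS, Measure.volume_eq_prod, ← Measure.prod_restrict]
    exact integral_prod F hFi'
  have hinner_integrable : IntegrableOn (fun r => ∫ t in Ioo (-π) π, F (r, t)) (Icc a b) :=
    hFi'.integral_prod_left
  -- rewrite inner integral
  have hinner : ∀ r : ℝ, (∫ t in Ioo (-π) π, F (r, t))
      = r * ∫ t in (0:ℝ)..(2*π), g (circleMap 0 r t) := by
    intro r
    have hper : Function.Periodic (fun t => g (circleMap 0 r t)) (2*π) := by
      intro t
      simp only []
      rw [periodic_circleMap 0 r t]
    calc (∫ t in Ioo (-π) π, F (r, t))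
        = ∫ t in Ioo (-π) π, r * g (circleMap 0 r t) := by
          apply setIntegral_congr_fun measurableSet_Ioo
          intro t _
          rw [hF]
          simp only []
          rw [hcm]
      _ = r * ∫ t in Ioo (-π) π, g (circleMap 0 r t) := by rw [integral_const_mul]
      _ = r * ∫ t in (-π)..π, g (circleMap 0 r t) := by
          rw [intervalIntegral.integral_of_le (by linarith), integral_Ioc_eq_integral_Ioo]
      _ = r * ∫ t in (0:ℝ)..(2*π), g (circleMap 0 r t) := by
          congr 1
          have := hper.intervalIntegral_add_eq (0:ℝ) (-π)
          rw [zero_add] at this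
          rw [this]
          congr 1
          ring
  constructor
  · rw [step1, step2, step3]
    apply setIntegral_congr_fun measurableSet_Icc
    intro r _
    exact hinner r
  · have : (fun r => r * ∫ t in (0:ℝ)..(2*π), g (circleMap 0 r t))
        = fun r => ∫ t in Ioo (-π) π, F (r, t) := by
      funext r; rw [hinner r]
    rw [this]
    exact hinner_integrable

set_option maxHeartbeats 1000000 in
/-- For every `k ≥ 1`, `q ∈ [1,∞)` and `0 < θ₁ < θ₂ < 1` there is a constant `C > 0` such that
for every `R > 0`, every `h` holomorphic on a neighbourhood of the closed disc of radius `R`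
and all pairwise distinct `λ₁,…,λ_k` with `|λ_i| ≤ θ₁ R`, one has
`|h[λ₁,…,λ_k]|^q ≤ C R^{-(k-1)q-2} ∫_{θ₂R ≤ |ξ| ≤ R} |h(ξ)|^q dV(ξ)`. -/
theorem divDiff_Lq_bound (k : ℕ) (hk : 1 ≤ k) (q : ℝ) (hq : 1 ≤ q)
    (θ₁ θ₂ : ℝ) (hθ₁ : 0 < θ₁) (hθ₁₂ : θ₁ < θ₂) (hθ₂ : θ₂ < 1) :
    ∃ C > (0 : ℝ), ∀ R > (0 : ℝ), ∀ (h : ℂ → ℂ) (U : Set ℂ), IsOpen U →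
      Metric.closedBall (0 : ℂ) R ⊆ U → DifferentiableOn ℂ h U →
      ∀ l : List ℂ, l.length = k → l.Pairwise (· ≠ ·) →
        (∀ x ∈ l, ‖x‖ ≤ θ₁ * R) →
        ‖divDiff h l‖ ^ q ≤
          C * R ^ (-(((k : ℝ) - 1) * q) - 2) *
            ∫ ξ in {ξ : ℂ | θ₂ * R ≤ ‖ξ‖ ∧ ‖ξ‖ ≤ R},
              ‖h ξ‖ ^ q := by
  obtain ⟨m, rfl⟩ : ∃ m, k = m + 1 := ⟨k - 1, by omega⟩
  have hθ₂0 : 0 < θ₂ := lt_trans hθ₁ hθ₁₂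
  have hθd : 0 < θ₂ - θ₁ := by linarith
  have h1θ : 0 < 1 - θ₂^2 := by nlinarith
  set c₀ : ℝ := (θ₂ - θ₁) ^ (m + 1) with hc₀
  have hc₀pos : 0 < c₀ := by positivity
  have hc₀q : 0 < c₀ ^ q := Real.rpow_pos_of_pos hc₀pos q
  set P : ℝ := π * (1 - θ₂^2) * c₀ ^ q with hP
  have hPpos : 0 < P := by positivity
  refine ⟨P⁻¹, by positivity, ?_⟩
  intro R hR h U hU hsubU hdiff l hlen hpair hmem
  have hRq : 0 ≤ R := hR.le
  set a : ℝ := θ₂ * R with ha'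
  have ha : 0 < a := by positivity
  have hab : a ≤ R := by nlinarith
  have hhc : ContinuousOn h (Metric.closedBall 0 R) := hdiff.continuousOn.mono hsubU
  have hrpow_cont : Continuous (fun x : ℝ => x ^ q) := by
    rw [continuous_iff_continuousAt]
    intro x
    exact Real.continuousAt_rpow_const x q (Or.inr (by linarith))
  have hgc : ContinuousOn (fun ξ => ‖h ξ‖ ^ q) (Metric.closedBall (0:ℂ) R) :=
    hrpow_cont.comp_continuousOn (continuous_norm.comp_continuousOn hhc)
  obtain ⟨heq, hint⟩ := annulus_polar ha hab hgc
  set D := ‖divDiff h l‖ with hD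
  have hDnn : 0 ≤ D := norm_nonneg _
  have hDq : 0 ≤ D ^ q := Real.rpow_nonneg hDnn q
  have hne : l ≠ [] := by
    intro hc; rw [hc] at hlen; simp at hlen
  set E : ℝ := c₀ * R ^ m with hE
  have hEpos : 0 < E := by positivity
  have hEq : 0 ≤ E ^ q := (Real.rpow_pos_of_pos hEpos q).le
  -- pointwise comparison on [a, R]
  have key : ∀ r ∈ Icc a R, 2 * π * D ^ q * E ^ q * r ≤
      r * ∫ t in (0:ℝ)..(2*π), ‖h (circleMap 0 r t)‖ ^ q := by
    intro r hr
    have hr0 : 0 < r := lt_of_lt_of_le ha hr.1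
    have hrR : r ≤ R := hr.2
    have hball : Metric.ball (0:ℂ) r ⊆ U := by
      intro x hx
      apply hsubU
      rw [Metric.mem_ball] at hx
      rw [Metric.mem_closedBall]
      linarith
    have hd : DiffContOnCl ℂ h (Metric.ball (0:ℂ) r) := by
      constructor
      · exact hdiff.mono hball
      · rw [closure_ball (0:ℂ) hr0.ne']
        apply hhc.mono
        intro x hx
        rw [Metric.mem_closedBall] at hx ⊢
        linarith
    have hsθ : 0 ≤ θ₁ * R := by positivity
    have hsr : θ₁ * R < r := by
      have : θ₁ * R < θ₂ * R := by nlinarith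
      calc θ₁ * R < a := this
        _ ≤ r := hr.1
    have hq1 := per_radius_q_bound hsθ hsr hr0 hd l hne hpair hmem hq
    -- E ≤ (r - θ₁*R) ^ l.length / r
    have hX : E ≤ (r - θ₁ * R) ^ l.length / r := by
      rw [hlen, hE, hc₀]
      have hnum : ((θ₂ - θ₁) * R) ^ (m+1) ≤ (r - θ₁ * R) ^ (m+1) := by
        apply pow_le_pow_left₀ (by positivity)
        have : θ₂ * R ≤ r := hr.1
        nlinarith
      have e1 : (θ₂ - θ₁) ^ (m+1) * R ^ m = ((θ₂ - θ₁) * R) ^ (m+1) / R := by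
        rw [mul_pow, pow_succ R m]
        field_simp
      rw [e1]
      apply div_le_div₀ (pow_nonneg (by linarith) _) hnum hr0 hrR
    have hXq : E ^ q ≤ ((r - θ₁ * R) ^ l.length / r) ^ q :=
      Real.rpow_le_rpow hEpos.le hX (by linarith)
    calc 2 * π * D ^ q * E ^ q * r
        = (2 * π * D ^ q * E ^ q) * r := by ring
      _ ≤ (2 * π * D ^ q * ((r - θ₁ * R) ^ l.length / r) ^ q) * r := by
          apply mul_le_mul_of_nonneg_right _ hr0.le
          apply mul_le_mul_of_nonneg_left hXq (by positivity)
      _ ≤ (∫ t in (0:ℝ)..(2*π), ‖h (circleMap 0 r t)‖ ^ q) * r := by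
          apply mul_le_mul_of_nonneg_right hq1 hr0.le
      _ = r * ∫ t in (0:ℝ)..(2*π), ‖h (circleMap 0 r t)‖ ^ q := mul_comm _ _
  -- integrate the comparison over [a, R]
  have hsmall : IntegrableOn (fun r : ℝ => 2 * π * D ^ q * E ^ q * r) (Icc a R) :=
    (continuous_const.mul continuous_id).integrableOn_Icc
  have hmono := setIntegral_mono_on hsmall hint measurableSet_Icc key
  have hsmallval : (∫ r in Icc a R, 2 * π * D ^ q * E ^ q * r)
      = 2 * π * D ^ q * E ^ q * ((R^2 - a^2)/2) := by
    rw [integral_const_mul, integral_Icc_eq_integral_Ioc,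
      ← intervalIntegral.integral_of_le hab, integral_id]
  rw [hsmallval, ← heq] at hmono
  -- final algebra
  have hIlow : P * (R ^ m : ℝ) ^ q * R ^ 2 * D ^ q ≤
      ∫ ξ in {ξ : ℂ | a ≤ ‖ξ‖ ∧ ‖ξ‖ ≤ R}, ‖h ξ‖ ^ q := by
    refine le_trans ?_ hmono
    have hEq' : E ^ q = c₀ ^ q * ((R:ℝ) ^ m) ^ q := by
      rw [hE, Real.mul_rpow hc₀pos.le (by positivity)]
    rw [hEq', hP, ha']
    apply le_of_eq
    ring
  have hcast : -(((↑(m+1) : ℝ) - 1) * q) - 2 = -((m:ℝ) * q) - 2 := by push_cast; ring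
  rw [hcast]
  have hRpow : R ^ (-((m:ℝ) * q) - 2) * (((R:ℝ) ^ m) ^ q * R ^ 2) = 1 := by
    have e1 : ((R:ℝ) ^ m) ^ q = R ^ ((m:ℝ) * q) := by
      rw [← Real.rpow_natCast R m, ← Real.rpow_mul hRq]
    have e2 : (R:ℝ) ^ (2:ℕ) = R ^ ((2:ℕ):ℝ) := by rw [Real.rpow_natCast]
    rw [e1, e2, ← Real.rpow_add hR, ← Real.rpow_add hR]
    norm_num
  set I := ∫ ξ in {ξ : ℂ | a ≤ ‖ξ‖ ∧ ‖ξ‖ ≤ R}, ‖h ξ‖ ^ q with hI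
  have hRpos : 0 < R ^ (-((m:ℝ) * q) - 2) := Real.rpow_pos_of_pos hR _
  calc D ^ q = P⁻¹ * R ^ (-((m:ℝ) * q) - 2) * (P * ((R:ℝ) ^ m) ^ q * R ^ 2 * D ^ q) := by
        field_simp
        linear_combination (-(D ^ q)) * hRpow
    _ ≤ P⁻¹ * R ^ (-((m:ℝ) * q) - 2) * I := by
        apply mul_le_mul_of_nonneg_left hIlow (by positivity)


end
end
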